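/- Let n ≥ 1 and let S, T ⊆ {1,…,n} be nonempty proper subsets. Then the intersection F_S ∩ F_T of the corresponding facets of the permutohedron Π_{n−1} is nonempty if and only if S ⊆ T or T ⊆ S. -/

import Mathlib

/-- The vertex `v_σ` of the permutohedron: its `i`-th coordinate is `σ⁻¹(i)`
(with values in `{1, …, n}`). -/
noncomputable def permuVertex (n : ℕ) (σ : Equiv.Perm (Fin n)) : Fin n → ℝ :=
  fun i => ((σ⁻¹ i : ℕ) : ℝ) + 1

/-- The `(n-1)`-dimensional permutohedron `Π_{n-1} ⊆ ℝ^n`: the convex hull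
of the `n!` points `v_σ`. -/
noncomputable def permutohedron (n : ℕ) : Set (Fin n → ℝ) :=
  convexHull ℝ (Set.range (permuVertex n))

/-- The facet `F_S` of the permutohedron, for a nonempty proper `S ⊆ {1, …, n}` with
`|S| = k`: the points of the permutohedron where `∑_{i ∈ S} x_i = k(k+1)/2`. -/
noncomputable def facet (n : ℕ) (S : Finset (Fin n)) : Set (Fin n → ℝ) :=
  {x ∈ permutohedron n |
    ∑ i ∈ S, x i = ((S.card : ℝ) * ((S.card : ℝ) + 1)) / 2}


def firstK (n k : ℕ) : Finset (Fin n) := Finset.univ.filter (fun i => (i : ℕ) < k)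

lemma mem_firstK {n k : ℕ} {i : Fin n} : i ∈ firstK n k ↔ (i : ℕ) < k := by
  simp [firstK]

lemma firstK_card {n k : ℕ} (h : k ≤ n) : (firstK n k).card = k := by
  have himg : (firstK n k).image Fin.val = Finset.range k := by
    ext a
    simp only [Finset.mem_image, Finset.mem_range, mem_firstK]
    constructor
    · rintro ⟨i, hi, rfl⟩; exact hi
    · intro ha; exact ⟨⟨a, lt_of_lt_of_le ha h⟩, ha, rfl⟩
  calc (firstK n k).card = ((firstK n k).image Fin.val).card :=
        (Finset.card_image_of_injective _ Fin.val_injective).symm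
    _ = k := by rw [himg, Finset.card_range]

lemma sum_range_succ_gauss (k : ℕ) : ∑ a ∈ Finset.range k, (a + 1) = k * (k + 1) / 2 := by
  induction k with
  | zero => rfl
  | succ k ih =>
      rw [Finset.sum_range_succ, ih]
      obtain ⟨c, hc⟩ := (Nat.even_mul_succ_self k).two_dvd
      have hd : (k + 1) * (k + 1 + 1) = 2 * (c + (k + 1)) := by nlinarith [hc]
      rw [hc, hd, Nat.mul_div_cancel_left _ (by norm_num : 0 < 2),
        Nat.mul_div_cancel_left _ (by norm_num : 0 < 2)]

lemma sum_firstK {n k : ℕ} (h : k ≤ n) :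
    ∑ j ∈ firstK n k, ((j : ℕ) + 1) = k * (k + 1) / 2 := by
  have himg : (firstK n k).image Fin.val = Finset.range k := by
    ext a
    simp only [Finset.mem_image, Finset.mem_range, mem_firstK]
    constructor
    · rintro ⟨i, hi, rfl⟩; exact hi
    · intro ha; exact ⟨⟨a, lt_of_lt_of_le ha h⟩, ha, rfl⟩
  rw [← sum_range_succ_gauss, ← himg,
    Finset.sum_image (fun x _ y _ h => Fin.val_injective h)]

lemma strictMono_le_nat {k : ℕ} {f : Fin k → ℕ} (hf : StrictMono f) (i : Fin k) :
    (i : ℕ) ≤ f i := by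
  obtain ⟨v, hv⟩ := i
  induction v with
  | zero => exact Nat.zero_le _
  | succ j ih =>
      have hj : j < k := Nat.lt_of_succ_lt hv
      have h1 : j ≤ f ⟨j, hj⟩ := ih hj
      have h2 : f ⟨j, hj⟩ < f ⟨j + 1, hv⟩ := hf (by simp [Fin.lt_def])
      show j + 1 ≤ f ⟨j + 1, hv⟩
      omega


lemma sum_A_eq {n : ℕ} (A : Finset (Fin n)) :
    ∑ j ∈ A, ((j : ℕ) + 1) = ∑ i : Fin A.card, (((A.orderEmbOfFin rfl i : Fin n) : ℕ) + 1) := by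
  have hrange : A = Finset.image (A.orderEmbOfFin rfl) Finset.univ := by
    apply Finset.coe_injective
    rw [Finset.coe_image, Finset.coe_univ, Set.image_univ, Finset.range_orderEmbOfFin]
  conv_lhs => rw [hrange]
  rw [Finset.sum_image (fun x _ y _ h => (A.orderEmbOfFin rfl).injective h)]

lemma sum_val_ge {n : ℕ} (A : Finset (Fin n)) :
    A.card * (A.card + 1) / 2 ≤ ∑ j ∈ A, ((j : ℕ) + 1) := by
  rw [sum_A_eq]
  have hmono : StrictMono (fun i : Fin A.card => ((A.orderEmbOfFin rfl i : Fin n) : ℕ)) :=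
    Fin.val_strictMono.comp (A.orderEmbOfFin rfl).strictMono
  calc A.card * (A.card + 1) / 2 = ∑ a ∈ Finset.range A.card, (a + 1) :=
        (sum_range_succ_gauss _).symm
    _ = ∑ i : Fin A.card, ((i : ℕ) + 1) := (Fin.sum_univ_eq_sum_range _ _).symm
    _ ≤ _ := Finset.sum_le_sum fun i _ =>
        Nat.add_le_add_right (strictMono_le_nat hmono i) 1

lemma sum_val_eq {n : ℕ} {A : Finset (Fin n)}
    (h : ∑ j ∈ A, ((j : ℕ) + 1) = A.card * (A.card + 1) / 2) : A = firstK n A.card := by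
  have hkn : A.card ≤ n := by
    simpa using Finset.card_le_univ A
  have hmono : StrictMono (fun i : Fin A.card => ((A.orderEmbOfFin rfl i : Fin n) : ℕ)) :=
    Fin.val_strictMono.comp (A.orderEmbOfFin rfl).strictMono
  have hle : ∀ i ∈ Finset.univ, ((i : Fin A.card) : ℕ) + 1 ≤
      ((A.orderEmbOfFin rfl i : Fin n) : ℕ) + 1 :=
    fun i _ => Nat.add_le_add_right (strictMono_le_nat hmono i) 1
  have hsum : ∑ i : Fin A.card, (((A.orderEmbOfFin rfl i : Fin n) : ℕ) + 1) =
      ∑ i : Fin A.card, ((i : ℕ) + 1) := by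
    rw [← sum_A_eq, h, ← sum_range_succ_gauss, ← Fin.sum_univ_eq_sum_range]
  have heach := (Finset.sum_eq_sum_iff_of_le hle).mp hsum.symm
  apply Finset.eq_of_subset_of_card_le
  · intro j hj
    have : j ∈ Finset.image (A.orderEmbOfFin rfl) Finset.univ := by
      have hrange : A = Finset.image (A.orderEmbOfFin rfl) Finset.univ := by
        apply Finset.coe_injective
        rw [Finset.coe_image, Finset.coe_univ, Set.image_univ, Finset.range_orderEmbOfFin]
      rwa [← hrange]
    obtain ⟨i, _, rfl⟩ := Finset.mem_image.mp this
    rw [mem_firstK]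
    have := heach i (Finset.mem_univ i)
    omega
  · rw [firstK_card hkn]

lemma cast_half (k : ℕ) : ((k * (k + 1) / 2 : ℕ) : ℝ) = (k : ℝ) * ((k : ℝ) + 1) / 2 := by
  obtain ⟨c, hc⟩ := (Nat.even_mul_succ_self k).two_dvd
  rw [hc, Nat.mul_div_cancel_left _ (by norm_num : 0 < 2)]
  have : ((2 * c : ℕ) : ℝ) = (k : ℝ) * ((k : ℝ) + 1) := by
    rw [← hc]; push_cast; ring
  push_cast at this ⊢
  linarith

lemma vertex_sum {n : ℕ} (σ : Equiv.Perm (Fin n)) (S : Finset (Fin n)) :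
    ∑ i ∈ S, permuVertex n σ i = ((∑ j ∈ S.image (fun i => σ⁻¹ i), ((j : ℕ) + 1) : ℕ) : ℝ) := by
  rw [Finset.sum_image (fun x _ y _ h => (σ⁻¹).injective h)]
  push_cast
  rfl

lemma isLinearMap_facetSum {n : ℕ} (S : Finset (Fin n)) :
    IsLinearMap ℝ (fun x : Fin n → ℝ => ∑ i ∈ S, x i) := by
  constructor
  · intro x y; simp [Finset.sum_add_distrib]
  · intro c x; simp [Finset.mul_sum]

lemma hull_sum_ge {n : ℕ} (S : Finset (Fin n)) {x : Fin n → ℝ}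
    (hx : x ∈ permutohedron n) :
    ((S.card * (S.card + 1) / 2 : ℕ) : ℝ) ≤ ∑ i ∈ S, x i := by
  have hsub : permutohedron n ⊆
      {y : Fin n → ℝ | ((S.card * (S.card + 1) / 2 : ℕ) : ℝ) ≤ ∑ i ∈ S, y i} := by
    apply convexHull_min
    · rintro y ⟨σ, rfl⟩
      simp only [Set.mem_setOf_eq]
      rw [vertex_sum]
      have := sum_val_ge (S.image (fun i => σ⁻¹ i))
      rw [Finset.card_image_of_injective _ (σ⁻¹).injective] at this
      exact_mod_cast this
    · exact convex_halfSpace_ge (isLinearMap_facetSum S) _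
  exact hsub hx

lemma support_eq_min {ι : Type} {t : Finset ι} {w a : ι → ℝ} {c : ℝ}
    (h0 : ∀ i ∈ t, 0 ≤ w i) (h1 : ∑ i ∈ t, w i = 1)
    (hac : ∀ i ∈ t, c ≤ a i) (he : ∑ i ∈ t, w i * a i = c) :
    ∀ i ∈ t, w i ≠ 0 → a i = c := by
  have key : ∀ i ∈ t, w i * c ≤ w i * a i := fun i hi =>
    mul_le_mul_of_nonneg_left (hac i hi) (h0 i hi)
  have hsum : ∑ i ∈ t, w i * a i = ∑ i ∈ t, w i * c := by
    rw [← Finset.sum_mul, h1, one_mul, he]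
  have heach := (Finset.sum_eq_sum_iff_of_le key).mp hsum.symm
  intro i hi hw
  exact (mul_left_cancel₀ hw (heach i hi)).symm

lemma exists_perm {n : ℕ} (S T : Finset (Fin n)) (hST : S ⊆ T) :
    ∃ τ : Equiv.Perm (Fin n), (∀ x ∈ S, ((τ x : Fin n) : ℕ) < S.card) ∧
      ∀ x ∈ T, ((τ x : Fin n) : ℕ) < T.card := by
  classical
  have hkm : S.card ≤ T.card := Finset.card_le_card hST
  have hmn : T.card ≤ n := by simpa using Finset.card_le_univ T
  have hkn : S.card ≤ n := le_trans hkm hmn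
  -- outer equivalence on S
  have c1 : Fintype.card {x : Fin n // x ∈ S} = Fintype.card {x : Fin n // (x : ℕ) < S.card} := by
    have h2 : Fintype.card {x : Fin n // (x : ℕ) < S.card} = S.card := by
      rw [Fintype.card_subtype]
      have h3 : Finset.univ.filter (fun x : Fin n => (x : ℕ) < S.card) = firstK n S.card := by
        ext x; simp [mem_firstK]
      rw [h3, firstK_card hkn]
    rw [h2]
    exact Fintype.card_coe S
  let e : {x : Fin n // x ∈ S} ≃ {x : Fin n // (x : ℕ) < S.card} := Fintype.equivOfCardEq c1
  -- inner equivalences on the complement of S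
  have c2 : Fintype.card {x : Fin n // ¬x ∈ S ∧ x ∈ T} =
      Fintype.card {x : Fin n // ¬(x : ℕ) < S.card ∧ (x : ℕ) < T.card} := by
    rw [Fintype.card_subtype, Fintype.card_subtype]
    have h1 : Finset.univ.filter (fun x : Fin n => ¬x ∈ S ∧ x ∈ T) = T \ S := by
      ext x; simp [Finset.mem_sdiff, and_comm]
    have h2 : Finset.univ.filter (fun x : Fin n => ¬(x : ℕ) < S.card ∧ (x : ℕ) < T.card) =
        firstK n T.card \ firstK n S.card := by
      ext x; simp [Finset.mem_sdiff, mem_firstK, and_comm]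
    rw [h1, h2, Finset.card_sdiff_of_subset hST, Finset.card_sdiff_of_subset, firstK_card hkn, firstK_card hmn]
    intro x hx
    rw [mem_firstK] at *
    omega
  have c3 : Fintype.card {x : Fin n // ¬x ∈ S ∧ ¬x ∈ T} =
      Fintype.card {x : Fin n // ¬(x : ℕ) < S.card ∧ ¬(x : ℕ) < T.card} := by
    rw [Fintype.card_subtype, Fintype.card_subtype]
    have h1 : Finset.univ.filter (fun x : Fin n => ¬x ∈ S ∧ ¬x ∈ T) = Finset.univ \ T := by
      ext x
      simp only [Finset.mem_filter, Finset.mem_univ, true_and, Finset.mem_sdiff]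
      exact ⟨fun h => h.2, fun h => ⟨fun hs => h (hST hs), h⟩⟩
    have h2 : Finset.univ.filter
        (fun x : Fin n => ¬(x : ℕ) < S.card ∧ ¬(x : ℕ) < T.card) =
        Finset.univ \ firstK n T.card := by
      ext x
      simp only [Finset.mem_filter, Finset.mem_univ, true_and, Finset.mem_sdiff, mem_firstK]
      omega
    rw [h1, h2, Finset.card_sdiff_of_subset (Finset.subset_univ _),
      Finset.card_sdiff_of_subset (Finset.subset_univ _), firstK_card hmn]
  let e' : {y : {x : Fin n // ¬x ∈ S} // (y : Fin n) ∈ T} ≃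
      {y : {x : Fin n // ¬(x : ℕ) < S.card} // ((y : Fin n) : ℕ) < T.card} :=
    (Equiv.subtypeSubtypeEquivSubtypeInter _ _).trans
      ((Fintype.equivOfCardEq c2).trans (Equiv.subtypeSubtypeEquivSubtypeInter _ _).symm)
  let f' : {y : {x : Fin n // ¬x ∈ S} // ¬(y : Fin n) ∈ T} ≃
      {y : {x : Fin n // ¬(x : ℕ) < S.card} // ¬((y : Fin n) : ℕ) < T.card} :=
    (Equiv.subtypeSubtypeEquivSubtypeInter _ _).trans
      ((Fintype.equivOfCardEq c3).trans (Equiv.subtypeSubtypeEquivSubtypeInter _ _).symm)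
  let f : {x : Fin n // ¬x ∈ S} ≃ {x : Fin n // ¬(x : ℕ) < S.card} :=
    (Equiv.sumCompl (fun y : {x : Fin n // ¬x ∈ S} => (y : Fin n) ∈ T)).symm.trans
      ((Equiv.sumCongr e' f').trans
        (Equiv.sumCompl (fun y : {x : Fin n // ¬(x : ℕ) < S.card} => ((y : Fin n) : ℕ) < T.card)))
  refine ⟨Equiv.subtypeCongr e f, ?_, ?_⟩
  · intro x hx
    have hτ : Equiv.subtypeCongr e f x = ↑(e ⟨x, hx⟩) := by
      simp [Equiv.subtypeCongr, Equiv.sumCompl_symm_apply_of_pos hx]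
    rw [hτ]
    exact (e ⟨x, hx⟩).2
  · intro x hx
    by_cases hs : x ∈ S
    · have hτ : Equiv.subtypeCongr e f x = ↑(e ⟨x, hs⟩) := by
        simp [Equiv.subtypeCongr, Equiv.sumCompl_symm_apply_of_pos hs]
      rw [hτ]
      exact lt_of_lt_of_le (e ⟨x, hs⟩).2 hkm
    · have hτ : Equiv.subtypeCongr e f x = ↑(f ⟨x, hs⟩) := by
        simp [Equiv.subtypeCongr, Equiv.sumCompl_symm_apply_of_neg hs]
      rw [hτ]
      have hf : f ⟨x, hs⟩ = ↑(e' ⟨⟨x, hs⟩, hx⟩) := by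
        simp only [f, Equiv.trans_apply]
        rw [Equiv.sumCompl_symm_apply_of_pos
          (p := fun y : {x : Fin n // ¬x ∈ S} => (y : Fin n) ∈ T) (a := ⟨x, hs⟩) hx]
        simp
      rw [hf]
      exact (e' ⟨⟨x, hs⟩, hx⟩).2

lemma image_eq_firstK {n : ℕ} {U : Finset (Fin n)} {τ : Equiv.Perm (Fin n)}
    (h : ∀ x ∈ U, ((τ x : Fin n) : ℕ) < U.card) :
    U.image (fun i => τ i) = firstK n U.card := by
  have hkn : U.card ≤ n := by simpa using Finset.card_le_univ U
  apply Finset.eq_of_subset_of_card_le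
  · intro j hj
    obtain ⟨i, hi, rfl⟩ := Finset.mem_image.mp hj
    exact mem_firstK.mpr (h i hi)
  · rw [firstK_card hkn, Finset.card_image_of_injective _ τ.injective]

lemma vertex_mem_facet {n : ℕ} {U : Finset (Fin n)} {τ : Equiv.Perm (Fin n)}
    (h : ∀ x ∈ U, ((τ x : Fin n) : ℕ) < U.card) :
    permuVertex n τ⁻¹ ∈ facet n U := by
  have hkn : U.card ≤ n := by simpa using Finset.card_le_univ U
  constructor
  · exact subset_convexHull ℝ _ ⟨τ⁻¹, rfl⟩
  · show ∑ i ∈ U, permuVertex n τ⁻¹ i = _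
    rw [vertex_sum]
    have himg : U.image (fun i => (τ⁻¹)⁻¹ i) = firstK n U.card := by
      rw [inv_inv]; exact image_eq_firstK h
    rw [himg, sum_firstK hkn, cast_half]

lemma inter_of_subset {n : ℕ} (S T : Finset (Fin n)) (hST : S ⊆ T) :
    (facet n S ∩ facet n T).Nonempty := by
  obtain ⟨τ, hτS, hτT⟩ := exists_perm S T hST
  exact ⟨permuVertex n τ⁻¹, vertex_mem_facet hτS, vertex_mem_facet hτT⟩

/-- Two facets `F_S`, `F_T` intersect if and only if `S ⊆ T` or `T ⊆ S`. -/
theorem statement6 (n : ℕ) (hn : 1 ≤ n) (S T : Finset (Fin n))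
    (hS : S.Nonempty) (hS' : S ≠ Finset.univ)
    (hT : T.Nonempty) (hT' : T ≠ Finset.univ) :
    (facet n S ∩ facet n T).Nonempty ↔ S ⊆ T ∨ T ⊆ S := by
  constructor
  · rintro ⟨x, ⟨hx1, hxS⟩, ⟨-, hxT⟩⟩
    rw [permutohedron, _root_.convexHull_eq] at hx1
    obtain ⟨ι, t, w, z, h0, h1, hz, hx⟩ := hx1
    obtain ⟨i0, hi0t, hw0⟩ := Finset.exists_ne_zero_of_sum_ne_zero
      (by rw [h1]; norm_num : ∑ i ∈ t, w i ≠ 0)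
    obtain ⟨σ, hσ⟩ := hz i0 hi0t
    have key : ∀ U : Finset (Fin n),
        (∑ j ∈ U, x j = ((U.card : ℝ) * ((U.card : ℝ) + 1)) / 2) →
        U.image (fun i => σ⁻¹ i) = firstK n U.card := by
      intro U hxU
      have hxU' : ∑ j ∈ U, x j = ((U.card * (U.card + 1) / 2 : ℕ) : ℝ) := by
        rw [hxU, cast_half]
      have hxeq : x = ∑ i ∈ t, w i • z i := by
        rw [← hx, Finset.centerMass_eq_of_sum_1 _ _ h1]
      have hcoord : ∀ j, x j = ∑ i ∈ t, w i * z i j := by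
        intro j; rw [hxeq]; simp [Finset.sum_apply]
      have hswap : ∑ i ∈ t, w i * (∑ j ∈ U, z i j) = ((U.card * (U.card + 1) / 2 : ℕ) : ℝ) := by
        rw [← hxU']
        calc ∑ i ∈ t, w i * ∑ j ∈ U, z i j = ∑ i ∈ t, ∑ j ∈ U, w i * z i j := by
              simp [Finset.mul_sum]
          _ = ∑ j ∈ U, ∑ i ∈ t, w i * z i j := Finset.sum_comm
          _ = ∑ j ∈ U, x j := by simp only [← hcoord]
      have hbound : ∀ i ∈ t, ((U.card * (U.card + 1) / 2 : ℕ) : ℝ) ≤ ∑ j ∈ U, z i j := by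
        intro i hi
        exact hull_sum_ge U (subset_convexHull ℝ _ (hz i hi))
      have hmin := support_eq_min h0 h1 hbound hswap i0 hi0t hw0
      rw [← hσ, vertex_sum σ U] at hmin
      have hnat : ∑ j ∈ U.image (fun i => σ⁻¹ i), ((j : ℕ) + 1) =
          U.card * (U.card + 1) / 2 := by exact_mod_cast hmin
      have := sum_val_eq (A := U.image (fun i => σ⁻¹ i)) (by
        rwa [Finset.card_image_of_injective _ (σ⁻¹).injective])
      rwa [Finset.card_image_of_injective _ (σ⁻¹).injective] at this
    have hSi := key S hxS
    have hTi := key T hxT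
    rcases le_total S.card T.card with h | h
    · left
      have hsub : firstK n S.card ⊆ firstK n T.card := fun j hj =>
        mem_firstK.mpr (lt_of_lt_of_le (mem_firstK.mp hj) h)
      have : S.image (fun i => σ⁻¹ i) ⊆ T.image (fun i => σ⁻¹ i) := by
        rw [hSi, hTi]; exact hsub
      rwa [Finset.image_subset_image_iff (σ⁻¹).injective] at this
    · right
      have hsub : firstK n T.card ⊆ firstK n S.card := fun j hj =>
        mem_firstK.mpr (lt_of_lt_of_le (mem_firstK.mp hj) h)
      have : T.image (fun i => σ⁻¹ i) ⊆ S.image (fun i => σ⁻¹ i) := by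
        rw [hSi, hTi]; exact hsub
      rwa [Finset.image_subset_image_iff (σ⁻¹).injective] at this
  · rintro (h | h)
    · exact inter_of_subset S T h
    · have := inter_of_subset T S h
      rwa [Set.inter_comm] at this
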